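/- If n = k(k+1)/2 is a triangular number, then for every partition λ of n there exists s ≥ 0 such that B^s(λ) = (k, k-1, ..., 2, 1), where B is the Bulgarian solitaire operator. -/
import Mathlib


/-- A partition of `n`: a multiset of positive integers summing to `n`
(multisets model nonincreasing sequences, since order is irrelevant). -/
def IsPartition (n : ℕ) (l : Multiset ℕ) : Prop :=
  l.sum = n ∧ ∀ x ∈ l, 0 < x

/-- The Bulgarian solitaire move: remove one card from each pile, discard empty
piles, and add a new pile whose size is the number of old piles. -/
def bulg (l : Multiset ℕ) : Multiset ℕ :=
  (Multiset.card l ::ₘ l.map (· - 1)).filter (0 < ·)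

/-- The staircase partition `(k, k-1, …, 2, 1)`. -/
def staircase (k : ℕ) : Multiset ℕ := (Multiset.range k).map (· + 1)

namespace BulgAux

open Multiset

/-- number of parts of `l` that are `≥ j` (the length of column `j` of the
Young diagram, `1`-indexed). -/
def cnt (l : Multiset ℕ) (j : ℕ) : ℕ := l.countP (fun x => j ≤ x)

/-- `Bit l d i` : the cell in position `i` (0-indexed row) on the diagonal
consisting of cells `(i, j)` with `i + j + 1 = d` (so column, 1-indexed, is
`d - i`). -/
def Bit (l : Multiset ℕ) (d i : ℕ) : Prop := i < cnt l (d - i)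

/- ---------- basic lemmas about bulg / cnt ---------- -/

theorem sum_filter_pos (m : Multiset ℕ) : (m.filter (0 < ·)).sum = m.sum := by
  induction m using Multiset.induction with
  | empty => simp
  | cons a t ih =>
    by_cases h : 0 < a
    · simp [Multiset.filter_cons_of_pos, h, ih]
    · have : a = 0 := by omega
      simp [Multiset.filter_cons_of_neg, h, ih, this]

theorem map_pred_sum (l : Multiset ℕ) (hpos : ∀ x ∈ l, 0 < x) :
    (l.map (· - 1)).sum + Multiset.card l = l.sum := by
  induction l using Multiset.induction with
  | empty => simp
  | cons a t ih =>
    have ha : 0 < a := hpos a (by simp)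
    have := ih (fun x hx => hpos x (by simp [hx]))
    simp only [Multiset.map_cons, Multiset.sum_cons, Multiset.card_cons]
    omega

theorem bulg_sum (l : Multiset ℕ) (hpos : ∀ x ∈ l, 0 < x) :
    (bulg l).sum = l.sum := by
  unfold bulg
  rw [sum_filter_pos, Multiset.sum_cons]
  have h1 := map_pred_sum l hpos
  omega

theorem bulg_pos (l : Multiset ℕ) : ∀ x ∈ bulg l, 0 < x := by
  intro x hx
  exact Multiset.of_mem_filter hx

theorem bulg_partition (n : ℕ) (l : Multiset ℕ) (h : IsPartition n l) :
    IsPartition n (bulg l) :=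
  ⟨by rw [bulg_sum l h.2]; exact h.1, bulg_pos l⟩

theorem iterate_partition (n : ℕ) (l : Multiset ℕ) (h : IsPartition n l) (s : ℕ) :
    IsPartition n (bulg^[s] l) := by
  induction s with
  | zero => simpa
  | succ s ih =>
    rw [Function.iterate_succ_apply']
    exact bulg_partition n _ ih

theorem cnt_cons (a : ℕ) (t : Multiset ℕ) (j : ℕ) :
    cnt (a ::ₘ t) j = cnt t j + (if j ≤ a then 1 else 0) := by
  unfold cnt
  rw [Multiset.countP_cons]

theorem cnt_filter_pos (m : Multiset ℕ) (j : ℕ) (hj : 1 ≤ j) :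
    cnt (m.filter (0 < ·)) j = cnt m j := by
  induction m using Multiset.induction with
  | empty => simp [cnt]
  | cons a t ih =>
    by_cases h : 0 < a
    · rw [Multiset.filter_cons_of_pos _ h, cnt_cons, cnt_cons, ih]
    · rw [Multiset.filter_cons_of_neg _ h, cnt_cons, ih]
      have : ¬ (j ≤ a) := by omega
      simp [this]

theorem cnt_map_pred (l : Multiset ℕ) (j : ℕ) (hj : 1 ≤ j) :
    cnt (l.map (· - 1)) j = cnt l (j + 1) := by
  induction l using Multiset.induction with
  | empty => simp [cnt]
  | cons a t ih =>
    rw [Multiset.map_cons, cnt_cons, cnt_cons, ih]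
    congr 1
    have : (j ≤ a - 1) ↔ (j + 1 ≤ a) := by omega
    simp [this]

theorem cnt_bulg (l : Multiset ℕ) (j : ℕ) (hj : 1 ≤ j) :
    cnt (bulg l) j = (if j ≤ Multiset.card l then 1 else 0) + cnt l (j + 1) := by
  unfold bulg
  rw [cnt_filter_pos _ _ hj, cnt_cons, cnt_map_pred _ _ hj]
  omega

theorem cnt_one (l : Multiset ℕ) (hpos : ∀ x ∈ l, 0 < x) :
    cnt l 1 = Multiset.card l := by
  unfold cnt
  exact Multiset.countP_eq_card.mpr (fun x hx => hpos x hx)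

theorem cnt_eq_zero (l : Multiset ℕ) (j : ℕ)
    (hC : ∀ x ∈ l, x ≤ Multiset.card l + 1) (hj : Multiset.card l + 2 ≤ j) :
    cnt l j = 0 := by
  unfold cnt
  rw [Multiset.countP_eq_zero]
  intro x hx
  have := hC x hx
  omega

theorem cnt_mono (l : Multiset ℕ) {i j : ℕ} (h : i ≤ j) : cnt l j ≤ cnt l i := by
  induction l using Multiset.induction with
  | empty => simp [cnt]
  | cons a t ih =>
    rw [cnt_cons, cnt_cons]
    by_cases h2 : j ≤ a
    · have : i ≤ a := le_trans h h2
      simp [h2, this]; omega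
    · simp [h2]; split <;> omega

/- ---------- the potential function ---------- -/

def tmin (a : ℕ) (l : Multiset ℕ) : ℕ := (l.map (fun b => min a b)).sum

def pairMin (l : Multiset ℕ) : ℕ := (l.map (fun a => tmin a l)).sum

def S1 (l : Multiset ℕ) : ℕ := (l.map (fun x => x + x * (x + 1))).sum

def psi (l : Multiset ℕ) : ℕ := S1 l + pairMin l

theorem tmin_cons (a b : ℕ) (t : Multiset ℕ) :
    tmin a (b ::ₘ t) = min a b + tmin a t := by
  simp [tmin]

theorem tmin_comm_sum (a : ℕ) (t : Multiset ℕ) :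
    (t.map (fun x => min x a)).sum = tmin a t := by
  unfold tmin
  congr 1
  exact Multiset.map_congr rfl (fun x _ => min_comm x a)

theorem pairMin_cons (a : ℕ) (t : Multiset ℕ) :
    pairMin (a ::ₘ t) = a + 2 * tmin a t + pairMin t := by
  unfold pairMin
  rw [Multiset.map_cons, Multiset.sum_cons, tmin_cons]
  have h1 : (t.map (fun x => tmin x (a ::ₘ t))).sum
      = (t.map (fun x => min x a)).sum + (t.map (fun x => tmin x t)).sum := by
    rw [← Multiset.sum_map_add]
    exact congrArg _ (Multiset.map_congr rfl (fun x _ => tmin_cons x a t))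
  rw [h1, tmin_comm_sum]
  simp; omega

theorem S1_cons (a : ℕ) (t : Multiset ℕ) :
    S1 (a ::ₘ t) = (a + a * (a + 1)) + S1 t := by
  simp [S1]

theorem psi_cons_zero (t : Multiset ℕ) : psi (0 ::ₘ t) = psi t := by
  unfold psi
  rw [S1_cons, pairMin_cons]
  have : tmin 0 t = 0 := by
    unfold tmin
    rw [Multiset.sum_eq_zero]
    intro x hx
    rcases Multiset.mem_map.mp hx with ⟨b, _, rfl⟩
    simp
  simp [this]


theorem tmin_filter_pos (a : ℕ) (t : Multiset ℕ) :
    tmin a (t.filter (0 < ·)) = tmin a t := by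
  induction t using Multiset.induction with
  | empty => simp
  | cons b u ihu =>
    by_cases hb : 0 < b
    · rw [Multiset.filter_cons_of_pos _ hb, tmin_cons, tmin_cons, ihu]
    · have : b = 0 := by omega
      subst this
      rw [Multiset.filter_cons_of_neg _ hb, tmin_cons, ihu]
      simp


theorem S1_filter_pos (t : Multiset ℕ) : S1 (t.filter (0 < ·)) = S1 t := by
  induction t using Multiset.induction with
  | empty => simp
  | cons b u ihu =>
    by_cases hb : 0 < b
    · rw [Multiset.filter_cons_of_pos _ hb, S1_cons, S1_cons, ihu]
    · have : b = 0 := by omega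
      subst this
      rw [Multiset.filter_cons_of_neg _ hb, ihu, S1_cons]
      simp

theorem pairMin_filter_pos (t : Multiset ℕ) : pairMin (t.filter (0 < ·)) = pairMin t := by
  induction t using Multiset.induction with
  | empty => simp
  | cons b u ihu =>
    by_cases hb : 0 < b
    · rw [Multiset.filter_cons_of_pos _ hb, pairMin_cons, pairMin_cons, ihu,
        tmin_filter_pos]
    · have : b = 0 := by omega
      subst this
      rw [Multiset.filter_cons_of_neg _ hb, ihu, pairMin_cons]
      have : tmin 0 u = 0 := by
        unfold tmin
        rw [Multiset.sum_eq_zero]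
        intro x hx
        rcases Multiset.mem_map.mp hx with ⟨b, _, rfl⟩
        simp
      simp [this]

theorem psi_filter_pos (m : Multiset ℕ) : psi (m.filter (0 < ·)) = psi m := by
  unfold psi
  rw [S1_filter_pos, pairMin_filter_pos]


theorem tmin_map_pred (a : ℕ) (ha : 1 ≤ a) (t : Multiset ℕ)
    (hpos : ∀ x ∈ t, 0 < x) :
    tmin (a - 1) (t.map (· - 1)) + Multiset.card t = tmin a t := by
  induction t using Multiset.induction with
  | empty => simp [tmin]
  | cons b u ih =>
    have hb : 0 < b := hpos b (by simp)
    have ihu := ih (fun x hx => hpos x (by simp [hx]))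
    rw [Multiset.map_cons, tmin_cons, tmin_cons, Multiset.card_cons]
    have : min (a - 1) (b - 1) + 1 = min a b := by omega
    omega

theorem S1_map_pred (l : Multiset ℕ) (hpos : ∀ x ∈ l, 0 < x) :
    S1 (l.map (· - 1)) + (2 * l.sum + Multiset.card l) = S1 l := by
  induction l using Multiset.induction with
  | empty => simp
  | cons a t ih =>
    have ha : 0 < a := hpos a (by simp)
    have iht := ih (fun x hx => hpos x (by simp [hx]))
    obtain ⟨b, rfl⟩ : ∃ b, a = b + 1 := ⟨a - 1, by omega⟩
    rw [Multiset.map_cons, S1_cons, S1_cons, Multiset.sum_cons, Multiset.card_cons]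
    have hr : (b + 1) * (b + 1 + 1) = (b + 1 - 1) * (b + 1 - 1 + 1) + 2 * (b + 1) := by
      simp
      ring
    omega

theorem tmin_card_lemma (c : ℕ) (l : Multiset ℕ) (hpos : ∀ x ∈ l, 0 < x) :
    tmin c (l.map (· - 1)) + Multiset.card l
      = (l.map (fun x => min (c + 1) x)).sum := by
  induction l using Multiset.induction with
  | empty => simp [tmin]
  | cons a t ih =>
    have ha : 0 < a := hpos a (by simp)
    have iht := ih (fun x hx => hpos x (by simp [hx]))
    rw [Multiset.map_cons, tmin_cons, Multiset.map_cons, Multiset.sum_cons,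
      Multiset.card_cons]
    have : min c (a - 1) + 1 = min (c + 1) a := by omega
    omega

theorem pairMin_map_pred (l : Multiset ℕ) (hpos : ∀ x ∈ l, 0 < x) :
    pairMin (l.map (· - 1)) + Multiset.card l * Multiset.card l = pairMin l := by
  induction l using Multiset.induction with
  | empty => simp
  | cons a t ih =>
    have ha : 0 < a := hpos a (by simp)
    have hpt : ∀ x ∈ t, 0 < x := fun x hx => hpos x (by simp [hx])
    have iht := ih hpt
    have htm := tmin_map_pred a ha t hpt
    rw [Multiset.map_cons, pairMin_cons, pairMin_cons, Multiset.card_cons]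
    have hr : (Multiset.card t + 1) * (Multiset.card t + 1)
        = Multiset.card t * Multiset.card t + 2 * Multiset.card t + 1 := by ring
    omega

theorem min_sum_split (c : ℕ) (l : Multiset ℕ) :
    (l.map (fun x => min (c + 1) x)).sum
      + (l.map (fun x => x - min (c + 1) x)).sum = l.sum := by
  rw [← Multiset.sum_map_add]
  have : (l.map (fun x => min (c + 1) x + (x - min (c + 1) x))) = l.map id := by
    apply Multiset.map_congr rfl
    intro x _
    simp only [id]
    omega
  rw [this, Multiset.map_id]

theorem psi_step (l : Multiset ℕ) (hpos : ∀ x ∈ l, 0 < x) :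
    psi l = psi (bulg l) +
      2 * ((l.map (fun x => x - min (Multiset.card l + 1) x)).sum) := by
  have hb : psi (bulg l) = psi (Multiset.card l ::ₘ l.map (· - 1)) := by
    unfold bulg
    rw [psi_filter_pos]
  set c := Multiset.card l with hc
  set m := l.map (· - 1) with hm
  have e0 : psi (c ::ₘ m) = (c + c * (c + 1)) + S1 m + (c + 2 * tmin c m + pairMin m) := by
    unfold psi
    rw [S1_cons, pairMin_cons]
  have e1 : S1 m + (2 * l.sum + c) = S1 l := S1_map_pred l hpos
  have e2 : tmin c m + c = (l.map (fun x => min (c + 1) x)).sum := tmin_card_lemma c l hpos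
  have e3 : pairMin m + c * c = pairMin l := pairMin_map_pred l hpos
  have e4 : (l.map (fun x => min (c + 1) x)).sum
      + (l.map (fun x => x - min (c + 1) x)).sum = l.sum := min_sum_split c l
  have hpsil : psi l = S1 l + pairMin l := rfl
  have hr : c * (c + 1) = c * c + c := by ring
  omega


theorem psi_step_eq (l : Multiset ℕ) (hpos : ∀ x ∈ l, 0 < x)
    (h : psi (bulg l) = psi l) : ∀ x ∈ l, x ≤ Multiset.card l + 1 := by
  have h1 := psi_step l hpos
  have h2 : ((l.map (fun x => x - min (Multiset.card l + 1) x)).sum) = 0 := by omega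
  intro x hx
  have := Multiset.sum_eq_zero_iff.mp h2 (x - min (Multiset.card l + 1) x)
    (Multiset.mem_map_of_mem _ hx)
  omega

/- ---------- rotation of diagonals ---------- -/

theorem rot_step (l : Multiset ℕ) (hpos : ∀ x ∈ l, 0 < x)
    (hC : ∀ x ∈ l, x ≤ Multiset.card l + 1) (hne : l ≠ 0)
    (d : ℕ) (hd : 0 < d) (p : ℕ) (hp : p < d) :
    (Bit (bulg l) d ((p + 1) % d) ↔ Bit l d p) := by
  have hcard : 0 < Multiset.card l := Multiset.card_pos.mpr hne
  have hc1 : cnt l 1 = Multiset.card l := cnt_one l hpos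
  by_cases hpd : p = d - 1
  · subst hpd
    have hmod : (d - 1 + 1) % d = 0 := by
      have : d - 1 + 1 = d := by omega
      rw [this, Nat.mod_self]
    rw [hmod]
    unfold Bit
    have h1 : d - 0 = d := by omega
    have h2 : d - (d - 1) = 1 := by omega
    rw [h1, h2, hc1, cnt_bulg l d hd]
    by_cases hdc : d ≤ Multiset.card l
    · simp only [if_pos hdc]
      omega
    · simp only [if_neg hdc]
      have hz : cnt l (d + 1) = 0 := cnt_eq_zero l (d + 1) hC (by omega)
      omega
  · have hp1 : p + 1 < d := by omega
    rw [Nat.mod_eq_of_lt hp1]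
    unfold Bit
    have hj : d - (p + 1) = d - p - 1 := by omega
    have hj1 : 1 ≤ d - p - 1 := by omega
    have hj2 : d - p - 1 + 1 = d - p := by omega
    rw [hj, cnt_bulg l (d - p - 1) hj1, hj2]
    by_cases hjc : d - p - 1 ≤ Multiset.card l
    · simp only [if_pos hjc]
      omega
    · simp only [if_neg hjc]
      have hz : cnt l (d - p) = 0 := cnt_eq_zero l (d - p) hC (by omega)
      omega

theorem rot_iter (n : ℕ) (hn : 0 < n) (μ : Multiset ℕ) (hp : IsPartition n μ)
    (hC : ∀ s, ∀ x ∈ bulg^[s] μ, x ≤ Multiset.card (bulg^[s] μ) + 1)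
    (d : ℕ) (hd : 0 < d) (i : ℕ) (hi : i < d) (s : ℕ) :
    (Bit (bulg^[s] μ) d ((i + s) % d) ↔ Bit μ d i) := by
  induction s with
  | zero =>
    simp [Nat.mod_eq_of_lt hi]
  | succ s ih =>
    have hps : IsPartition n (bulg^[s] μ) := iterate_partition n μ hp s
    have hne : bulg^[s] μ ≠ 0 := by
      intro h0
      have hsum := hps.1
      rw [h0, Multiset.sum_zero] at hsum
      omega
    have hstep := rot_step (bulg^[s] μ) hps.2 (hC s) hne d hd ((i + s) % d)
      (Nat.mod_lt _ hd)
    rw [Function.iterate_succ_apply']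
    have hm : ((i + s) % d + 1) % d = (i + (s + 1)) % d := by
      rw [Nat.mod_add_mod, Nat.add_assoc]
    rw [← hm]
    exact hstep.trans ih

theorem diag_full (n : ℕ) (hn : 0 < n) (μ : Multiset ℕ) (hp : IsPartition n μ)
    (hC : ∀ s, ∀ x ∈ bulg^[s] μ, x ≤ Multiset.card (bulg^[s] μ) + 1)
    (d : ℕ) (hd : 0 < d) (y : ℕ) (hy : y < d + 1) (hcell : Bit μ (d + 1) y) :
    ∀ x < d, Bit μ d x := by
  intro x hx
  by_contra hhole
  have hco : Nat.Coprime d (d + 1) := by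
    have : Nat.Coprime d (d + 1) ↔ Nat.Coprime d 1 := Nat.coprime_self_add_right
    rw [this]
    exact Nat.coprime_one_right d
  obtain ⟨s, hs1, hs2⟩ := Nat.chineseRemainder hco (2 * d - 1 - x) (2 * (d + 1) - 1 - y)
  have h1 : (x + s) % d = d - 1 := by
    have hmc : (x + s) % d = (x + (2 * d - 1 - x)) % d := (Nat.ModEq.add_left x hs1)
    rw [hmc]
    have he : x + (2 * d - 1 - x) = d + (d - 1) := by omega
    rw [he, Nat.add_mod_left]
    exact Nat.mod_eq_of_lt (by omega)
  have h2 : (y + s) % (d + 1) = d := by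
    have hmc : (y + s) % (d + 1) = (y + (2 * (d + 1) - 1 - y)) % (d + 1) :=
      (Nat.ModEq.add_left y hs2)
    rw [hmc]
    have he : y + (2 * (d + 1) - 1 - y) = (d + 1) + d := by omega
    rw [he, Nat.add_mod_left]
    exact Nat.mod_eq_of_lt (by omega)
  have hb1 := rot_iter n hn μ hp hC d hd x hx s
  have hb2 := rot_iter n hn μ hp hC (d + 1) (by omega) y hy s
  rw [h1] at hb1
  rw [h2] at hb2
  have hfalse : ¬ Bit (bulg^[s] μ) d (d - 1) := fun h => hhole (hb1.mp h)
  have htrue : Bit (bulg^[s] μ) (d + 1) d := hb2.mpr hcell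
  unfold Bit at hfalse htrue
  have e1 : d - (d - 1) = 1 := by omega
  have e2 : d + 1 - d = 1 := by omega
  rw [e1] at hfalse
  rw [e2] at htrue
  omega


def NonE (l : Multiset ℕ) (D : ℕ) : Prop := ∃ i, i < D ∧ Bit l D i

def Full (l : Multiset ℕ) (D : ℕ) : Prop := ∀ i, i < D → Bit l D i

theorem full_nonE {l : Multiset ℕ} {D : ℕ} (hD : 0 < D) (h : Full l D) : NonE l D :=
  ⟨0, hD, h 0 hD⟩

theorem P_prop (n : ℕ) (hn : 0 < n) (μ : Multiset ℕ) (hp : IsPartition n μ)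
    (hC : ∀ s, ∀ x ∈ bulg^[s] μ, x ≤ Multiset.card (bulg^[s] μ) + 1)
    (d : ℕ) (hd : 0 < d) (h : NonE μ (d + 1)) : Full μ d := by
  obtain ⟨y, hy, hcell⟩ := h
  intro x hx
  exact diag_full n hn μ hp hC d hd y hy hcell x hx

theorem full_below (n : ℕ) (hn : 0 < n) (μ : Multiset ℕ) (hp : IsPartition n μ)
    (hC : ∀ s, ∀ x ∈ bulg^[s] μ, x ≤ Multiset.card (bulg^[s] μ) + 1) :
    ∀ D e, 1 ≤ e → e < D → NonE μ D → Full μ e := by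
  intro D
  induction D with
  | zero => intro e h1 h2 _; omega
  | succ D ihD =>
    intro e h1 h2 hne2
    have hD : 0 < D := by omega
    have hfD : Full μ D := P_prop n hn μ hp hC D hD hne2
    rcases eq_or_lt_of_le (show e ≤ D by omega) with rfl | hlt
    · exact hfD
    · exact ihD e h1 hlt (full_nonE hD hfD)

theorem indicator_sum (a M : ℕ) :
    (∑ j ∈ Finset.range M, if j + 1 ≤ a then 1 else 0) = min a M := by
  induction M with
  | zero => simp
  | succ M ih =>
    rw [Finset.sum_range_succ, ih]
    by_cases h : M + 1 ≤ a
    · simp only [if_pos h]; omega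
    · simp only [if_neg h]; omega

theorem sum_cnt (l : Multiset ℕ) (M : ℕ) (hM : ∀ x ∈ l, x ≤ M) :
    (∑ j ∈ Finset.range M, cnt l (j + 1)) = l.sum := by
  induction l using Multiset.induction with
  | empty => simp [cnt]
  | cons a t ih =>
    have ha : a ≤ M := hM a (by simp)
    have iht := ih (fun x hx => hM x (by simp [hx]))
    have hsplit : (∑ j ∈ Finset.range M, cnt (a ::ₘ t) (j + 1))
        = (∑ j ∈ Finset.range M, cnt t (j + 1))
          + (∑ j ∈ Finset.range M, if j + 1 ≤ a then 1 else 0) := by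
      rw [← Finset.sum_add_distrib]
      apply Finset.sum_congr rfl
      intro j _
      rw [cnt_cons]
    rw [hsplit, iht, indicator_sum, Multiset.sum_cons]
    have : min a M = a := by omega
    omega

theorem cnt_succ (l : Multiset ℕ) (x : ℕ) :
    cnt l x = cnt l (x + 1) + Multiset.count x l := by
  induction l using Multiset.induction with
  | empty => simp [cnt]
  | cons a t ih =>
    rw [cnt_cons, cnt_cons, Multiset.count_cons]
    split_ifs <;> omega

theorem cnt_staircase (k j : ℕ) (hj : 1 ≤ j) : cnt (staircase k) j = k + 1 - j := by
  induction k with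
  | zero =>
    have : staircase 0 = 0 := by simp [staircase]
    rw [this]
    simp [cnt]
    omega
  | succ k ih =>
    have hs : staircase (k + 1) = (k + 1) ::ₘ staircase k := by
      unfold staircase
      rw [Multiset.range_succ, Multiset.map_cons]
    rw [hs, cnt_cons, ih]
    by_cases h : j ≤ k + 1
    · simp only [if_pos h]; omega
    · simp only [if_neg h]; omega

theorem staircase_pos (k : ℕ) : ∀ x ∈ staircase k, 0 < x := by
  intro x hx
  rcases Multiset.mem_map.mp hx with ⟨y, _, rfl⟩
  omega

theorem quad_mono {a b : ℕ} (h : a * (a + 1) ≤ b * (b + 1)) : a ≤ b := by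
  by_contra hab
  push_neg at hab
  nlinarith

theorem eq_staircase_of_cnt (μ : Multiset ℕ) (hpos : ∀ x ∈ μ, 0 < x) (k : ℕ)
    (h : ∀ j, 1 ≤ j → cnt μ j = k + 1 - j) : μ = staircase k := by
  ext a
  rcases Nat.eq_zero_or_pos a with rfl | ha
  · have h1 : Multiset.count 0 μ = 0 := by
      rw [Multiset.count_eq_zero]
      intro hmem
      exact absurd (hpos 0 hmem) (by omega)
    have h2 : Multiset.count 0 (staircase k) = 0 := by
      rw [Multiset.count_eq_zero]
      intro hmem
      exact absurd (staircase_pos k 0 hmem) (by omega)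
    rw [h1, h2]
  · have e1 := cnt_succ μ a
    have e2 := cnt_succ (staircase k) a
    have e3 := h a ha
    have e4 := h (a + 1) (by omega)
    have e5 := cnt_staircase k a ha
    have e6 := cnt_staircase k (a + 1) (by omega)
    omega


theorem gauss_sub : ∀ c m : ℕ, m ≤ c →
    2 * (∑ j ∈ Finset.range c, (m - j)) = m * (m + 1) := by
  intro c
  induction c with
  | zero => intro m hm; interval_cases m; simp
  | succ c ih =>
    intro m hm
    rcases Nat.eq_zero_or_pos m with rfl | hmp
    · simp
    · rw [Finset.sum_range_succ']
      have hcongr : (∑ j ∈ Finset.range c, (m - (j + 1)))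
          = (∑ j ∈ Finset.range c, ((m - 1) - j)) := by
        apply Finset.sum_congr rfl
        intro j _
        omega
      rw [hcongr]
      have h2 := ih (m - 1) (by omega)
      have hr : (m - 1) * (m - 1 + 1) + 2 * m = m * (m + 1) := by
        obtain ⟨e, rfl⟩ : ∃ e, m = e + 1 := ⟨m - 1, by omega⟩
        simp
        ring
      omega

theorem sq1 (c : ℕ) (h : 1 ≤ c) : (c - 1) * (c - 1 + 1) + 2 * c = c * (c + 1) := by
  obtain ⟨e, rfl⟩ : ∃ e, c = e + 1 := ⟨c - 1, by omega⟩
  simp only [Nat.add_sub_cancel]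
  ring

theorem sq3 (c : ℕ) (h : 1 ≤ c) :
    (c - 1) * (c - 1 + 1) + 1 ≤ 2 * c + (c - 2) * (c - 2 + 1) := by
  rcases Nat.lt_or_ge c 2 with h2 | h2
  · interval_cases c <;> simp
  · obtain ⟨e, rfl⟩ : ∃ e, c = e + 2 := ⟨c - 2, by omega⟩
    have e1 : e + 2 - 1 = e + 1 := rfl
    have e2 : e + 2 - 2 = e := rfl
    rw [e1, e2]
    nlinarith

theorem key (k n : ℕ) (hn2 : 2 * n = k * (k + 1)) (hk : 0 < k) (μ : Multiset ℕ)
    (hp : IsPartition n μ)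
    (hC : ∀ s, ∀ x ∈ bulg^[s] μ, x ≤ Multiset.card (bulg^[s] μ) + 1) :
    μ = staircase k := by
  have hn : 0 < n := by
    have : 2 ≤ k * (k + 1) := by nlinarith
    omega
  have hpos := hp.2
  have hcpos : 0 < Multiset.card μ := by
    rw [Multiset.card_pos]
    intro h0
    have := hp.1
    rw [h0, Multiset.sum_zero] at this
    omega
  set c := Multiset.card μ with hcdef
  have hc1 : cnt μ 1 = c := cnt_one μ hpos
  have hCM : ∀ x ∈ μ, x ≤ c + 1 := by
    have h0 := hC 0
    simpa using h0
  have hsum : (∑ j ∈ Finset.range (c + 1), cnt μ (j + 1)) = n := by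
    rw [sum_cnt μ (c + 1) (fun x hx => by have := hCM x hx; omega), hp.1]
  have hcnt_all : ∀ j, 1 ≤ j → cnt μ j = k + 1 - j := by
    by_cases hNE : NonE μ (c + 1)
    · -- case 1 : there is a cell on the diagonal c+1
      have full_c : Full μ c := P_prop n hn μ hp hC c hcpos hNE
      have hnot : ¬ NonE μ (c + 2) := by
        intro h2
        have hfc1 : Full μ (c + 1) :=
          full_below n hn μ hp hC (c + 2) (c + 1) (by omega) (by omega) h2
        have hb := hfc1 c (by omega)
        unfold Bit at hb
        rw [show c + 1 - c = 1 by omega, hc1] at hb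
        omega
      have hub : ∀ j, 1 ≤ j → j ≤ c + 1 → cnt μ j ≤ c + 2 - j := by
        intro j h1 h2
        by_contra hcon
        push_neg at hcon
        refine hnot ⟨c + 2 - j, by omega, ?_⟩
        unfold Bit
        rw [show c + 2 - (c + 2 - j) = j by omega]
        omega
      have hlb : ∀ j, 1 ≤ j → j ≤ c → c + 1 - j ≤ cnt μ j := by
        intro j h1 h2
        have hb := full_c (c - j) (by omega)
        unfold Bit at hb
        rw [show c - (c - j) = j by omega] at hb
        omega
      -- lower bound on the total
      have hlow : (∑ j ∈ Finset.range (c + 1), (c - j)) ≤ n := by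
        rw [← hsum]
        apply Finset.sum_le_sum
        intro j hj
        rw [Finset.mem_range] at hj
        rcases Nat.lt_or_ge j c with hjc | hjc
        · have := hlb (j + 1) (by omega) (by omega)
          omega
        · omega
      have hhigh : n ≤ (∑ j ∈ Finset.range (c + 1), (c + 1 - j)) := by
        rw [← hsum]
        apply Finset.sum_le_sum
        intro j hj
        rw [Finset.mem_range] at hj
        have := hub (j + 1) (by omega) (by omega)
        omega
      have hg1 : 2 * (∑ j ∈ Finset.range (c + 1), (c - j)) = c * (c + 1) :=
        gauss_sub (c + 1) c (by omega)
      have hg2 : 2 * (∑ j ∈ Finset.range (c + 1), (c + 1 - j)) = (c + 1) * (c + 2) :=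
        gauss_sub (c + 1) (c + 1) (by omega)
      -- pin down k
      have hkc : k = c ∨ k = c + 1 := by
        have hx : (c + 1) * (c + 1 + 1) = (c + 1) * (c + 2) := by ring
        have h3 : c ≤ k := quad_mono (by omega)
        have h4 : k ≤ c + 1 := quad_mono (a := k) (b := c + 1) (by omega)
        omega
      rcases hkc with rfl | rfl
      · -- k = c impossible : the sum would be at its minimum, no cell on diag c+1
        exfalso
        have heq : (∑ j ∈ Finset.range (c + 1), (c - j))
            = (∑ j ∈ Finset.range (c + 1), cnt μ (j + 1)) := by omega
        have hpt := (Finset.sum_eq_sum_iff_of_le (fun j hj => by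
          rw [Finset.mem_range] at hj
          rcases Nat.lt_or_ge j c with hjc | hjc
          · have := hlb (j + 1) (by omega) (by omega); omega
          · omega)).mp heq
        obtain ⟨i, hi, hbit⟩ := hNE
        unfold Bit at hbit
        have hji : c - i ∈ Finset.range (c + 1) := by
          rw [Finset.mem_range]; omega
        have := hpt (c - i) hji
        rw [show c - i + 1 = c + 1 - i by omega] at this
        omega
      · -- k = c + 1
        have hx : (c + 1) * (c + 1 + 1) = (c + 1) * (c + 2) := by ring
        have heq : (∑ j ∈ Finset.range (c + 1), cnt μ (j + 1))
            = (∑ j ∈ Finset.range (c + 1), (c + 1 - j)) := by omega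
        have hpt := (Finset.sum_eq_sum_iff_of_le (fun j hj => by
          rw [Finset.mem_range] at hj
          have := hub (j + 1) (by omega) (by omega)
          omega)).mp heq
        intro j hj
        rcases Nat.lt_or_ge j (c + 2) with hjc | hjc
        · have hji : j - 1 ∈ Finset.range (c + 1) := by
            rw [Finset.mem_range]; omega
          have := hpt (j - 1) hji
          rw [show j - 1 + 1 = j by omega] at this
          omega
        · have := cnt_eq_zero μ j hCM (by omega)
          omega
    · -- case 2 : no cell on the diagonal c+1
      have hub : ∀ j, 1 ≤ j → j ≤ c + 1 → cnt μ j ≤ c + 1 - j := by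
        intro j h1 h2
        by_contra hcon
        push_neg at hcon
        refine hNE ⟨c + 1 - j, by omega, ?_⟩
        unfold Bit
        rw [show c + 1 - (c + 1 - j) = j by omega]
        omega
      have hNc : NonE μ c := by
        refine ⟨c - 1, by omega, ?_⟩
        unfold Bit
        rw [show c - (c - 1) = 1 by omega, hc1]
        omega
      have hlb : ∀ j, 1 ≤ j → j ≤ c - 1 → c - j ≤ cnt μ j := by
        intro j h1 h2
        have hc2 : 2 ≤ c := by omega
        have hfc1 : Full μ (c - 1) :=
          full_below n hn μ hp hC c (c - 1) (by omega) (by omega) hNc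
        have hb := hfc1 (c - 1 - j) (by omega)
        unfold Bit at hb
        rw [show c - 1 - (c - 1 - j) = j by omega] at hb
        omega
      -- split off column 1
      have hsplit : n = c + (∑ j ∈ Finset.range c, cnt μ (j + 2)) := by
        rw [← hsum, Finset.sum_range_succ']
        have : (∑ j ∈ Finset.range c, cnt μ (j + 1 + 1))
            = (∑ j ∈ Finset.range c, cnt μ (j + 2)) := by
          apply Finset.sum_congr rfl
          intro j _
          norm_num
        rw [this, hc1]
        omega
      have hlow : (∑ j ∈ Finset.range c, (c - 2 - j))
          ≤ (∑ j ∈ Finset.range c, cnt μ (j + 2)) := by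
        apply Finset.sum_le_sum
        intro j hj
        rw [Finset.mem_range] at hj
        rcases Nat.lt_or_ge j (c - 2) with hjc | hjc
        · have := hlb (j + 2) (by omega) (by omega)
          omega
        · omega
      have hhigh : (∑ j ∈ Finset.range c, cnt μ (j + 2))
          ≤ (∑ j ∈ Finset.range c, (c - 1 - j)) := by
        apply Finset.sum_le_sum
        intro j hj
        rw [Finset.mem_range] at hj
        have := hub (j + 2) (by omega) (by omega)
        omega
      have hg1 : 2 * (∑ j ∈ Finset.range c, (c - 2 - j)) = (c - 2) * (c - 2 + 1) :=
        gauss_sub c (c - 2) (by omega)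
      have hg2 : 2 * (∑ j ∈ Finset.range c, (c - 1 - j)) = (c - 1) * (c - 1 + 1) :=
        gauss_sub c (c - 1) (by omega)
      -- pin down k = c
      have hkc : k = c := by
        have hx := sq1 c (by omega)
        have hklec : k ≤ c := quad_mono (by omega)
        by_contra hne2
        have hklt : k ≤ c - 1 := by omega
        have h1 : k * (k + 1) ≤ (c - 1) * (c - 1 + 1) :=
          Nat.mul_le_mul hklt (by omega)
        have h3 := sq3 c (by omega)
        omega
      subst hkc
      have hx := sq1 c (by omega)
      have heq : (∑ j ∈ Finset.range c, cnt μ (j + 2))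
          = (∑ j ∈ Finset.range c, (c - 1 - j)) := by omega
      have hpt := (Finset.sum_eq_sum_iff_of_le (fun j hj => by
        rw [Finset.mem_range] at hj
        have := hub (j + 2) (by omega) (by omega)
        omega)).mp heq
      intro j hj
      rcases Nat.lt_or_ge j (c + 2) with hjc | hjc
      · rcases Nat.eq_or_lt_of_le hj with rfl | hj2
        · omega
        · have hji : j - 2 ∈ Finset.range c := by
            rw [Finset.mem_range]; omega
          have := hpt (j - 2) hji
          rw [show j - 2 + 2 = j by omega] at this
          omega
      · have := cnt_eq_zero μ j hCM (by omega)
        omega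
  exact eq_staircase_of_cnt μ hpos k hcnt_all

end BulgAux

theorem bulg_reaches_staircase (k n : ℕ) (hn : n = k * (k + 1) / 2)
    (l : Multiset ℕ) (hl : IsPartition n l) :
    ∃ s : ℕ, bulg^[s] l = staircase k := by
  rcases Nat.eq_zero_or_pos k with rfl | hk
  · -- k = 0 : the empty partition
    have hn0 : n = 0 := by simpa using hn
    subst hn0
    refine ⟨0, ?_⟩
    simp only [Function.iterate_zero, id]
    have hl0 : l = 0 := by
      apply Multiset.eq_zero_of_forall_notMem
      intro x hx
      have h1 := hl.2 x hx
      have h2 := Multiset.sum_eq_zero_iff.mp hl.1 x hx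
      omega
    rw [hl0]
    simp [staircase]
  · have hdvd : 2 ∣ k * (k + 1) := (Nat.even_mul_succ_self k).two_dvd
    have hn2 : 2 * n = k * (k + 1) := by
      rw [hn]
      exact Nat.mul_div_cancel' hdvd
    set g : ℕ → ℕ := fun t => BulgAux.psi (bulg^[t] l) with hg
    have hpart : ∀ s, IsPartition n (bulg^[s] l) := BulgAux.iterate_partition n l hl
    have hstep : ∀ t, g (t + 1) ≤ g t := by
      intro t
      have h := BulgAux.psi_step (bulg^[t] l) (hpart t).2
      simp only [hg]
      rw [Function.iterate_succ_apply']
      omega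
    have hmono : ∀ m t, g (t + m) ≤ g t := by
      intro m
      induction m with
      | zero => intro t; simp
      | succ m ih =>
        intro t
        have h1 := hstep (t + m)
        have h2 := ih t
        rw [show t + (m + 1) = t + m + 1 by omega]
        omega
    obtain ⟨T, hT⟩ : ∃ T, g T = sInf (Set.range g) := by
      obtain ⟨T, hT2⟩ := Nat.sInf_mem (Set.range_nonempty g)
      exact ⟨T, hT2⟩
    have hconst : ∀ t, T ≤ t → g t = g T := by
      intro t ht
      have h1 : g t ≤ g T := by
        have := hmono (t - T) T
        rw [show T + (t - T) = t by omega] at this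
        exact this
      have h2 : g T ≤ g t := by
        rw [hT]
        exact Nat.sInf_le ⟨t, rfl⟩
      omega
    set μ := bulg^[T] l with hμ
    have hiter : ∀ s, bulg^[s] μ = bulg^[s + T] l := by
      intro s
      rw [hμ, ← Function.iterate_add_apply]
    have hCμ : ∀ s, ∀ x ∈ bulg^[s] μ, x ≤ Multiset.card (bulg^[s] μ) + 1 := by
      intro s
      rw [hiter s]
      apply BulgAux.psi_step_eq _ (hpart (s + T)).2
      have h1 : g (s + T) = g T := hconst _ (by omega)
      have h2 : g (s + T + 1) = g T := hconst _ (by omega)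
      have h3 : BulgAux.psi (bulg^[s + T + 1] l) = BulgAux.psi (bulg^[s + T] l) := by
        have e1 : g (s + T + 1) = BulgAux.psi (bulg^[s + T + 1] l) := rfl
        have e2 : g (s + T) = BulgAux.psi (bulg^[s + T] l) := rfl
        omega
      rw [Function.iterate_succ_apply'] at h3
      exact h3
    exact ⟨T, BulgAux.key k n hn2 hk μ (hpart T) hCμ⟩
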